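/- Let X and Y be d×K complex matrices such that ρ := XX† and σ := YY† both have trace 1. Then the trace-norm distance satisfies ‖ρ − σ‖₁ ≤ 2·‖X − Y‖₂. -/

import Mathlib

open scoped Matrix ComplexOrder

open scoped Classical in
/-- The positive semidefinite square root of a matrix: the PSD square root if the
matrix is positive semidefinite, and `0` otherwise (junk value). -/
noncomputable def psdSqrt {n : Type*} [Fintype n] [DecidableEq n]
    (M : Matrix n n ℂ) : Matrix n n ℂ :=
  if h : M.PosSemidef then
    h.1.eigenvectorUnitary.1 * Matrix.diagonal ((↑) ∘ (√·) ∘ h.1.eigenvalues) *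
      (star h.1.eigenvectorUnitary : Matrix n n ℂ)
  else 0

/-- The fidelity `F(ρ,σ) := Tr((√σ ρ √σ)^{1/2})` of two (positive semidefinite)
matrices, as a real number. -/
noncomputable def fidelity {n : Type*} [Fintype n] [DecidableEq n]
    (ρ σ : Matrix n n ℂ) : ℝ :=
  (Matrix.trace (psdSqrt (psdSqrt σ * ρ * psdSqrt σ))).re

/-- The trace norm `‖M‖₁ := Tr((M†M)^{1/2})` of a complex matrix. -/
noncomputable def traceNorm {m n : Type*} [Fintype m] [Fintype n] [DecidableEq n]
    (M : Matrix m n ℂ) : ℝ :=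
  (Matrix.trace (psdSqrt (Mᴴ * M))).re

/-- The Frobenius norm `‖M‖₂ := (Tr(M†M))^{1/2}` of a complex matrix. -/
noncomputable def frobeniusNorm' {m n : Type*} [Fintype m] [Fintype n]
    (M : Matrix m n ℂ) : ℝ :=
  Real.sqrt (Matrix.trace (Mᴴ * M)).re

section Aux

open Matrix Finset Complex

/-- The real part of `Tr(A†A)` is the sum of squared moduli of the entries. -/
lemma trace_conjTranspose_mul_self_re {m n : Type*} [Fintype m] [Fintype n]
    (A : Matrix m n ℂ) :
    (Matrix.trace (Aᴴ * A)).re = ∑ i, ∑ j, Complex.normSq (A i j) := by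
  rw [Matrix.trace]
  simp only [Matrix.diag_apply, Matrix.mul_apply, Matrix.conjTranspose_apply]
  rw [Complex.re_sum, Finset.sum_comm]
  refine Finset.sum_congr rfl fun i _ => ?_
  rw [Complex.re_sum]
  refine Finset.sum_congr rfl fun j _ => ?_
  simp [Complex.star_def, Complex.mul_re, Complex.normSq_apply]

lemma frobeniusNorm'_eq {m n : Type*} [Fintype m] [Fintype n] (A : Matrix m n ℂ) :
    frobeniusNorm' A = Real.sqrt (∑ i, ∑ j, Complex.normSq (A i j)) := by
  rw [frobeniusNorm', trace_conjTranspose_mul_self_re]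

/-- Frobenius norm is invariant under multiplication by the adjoint of a unitary. -/
lemma frobeniusNorm'_conjTranspose_unitary_mul {d K : ℕ} (V : Matrix (Fin d) (Fin d) ℂ)
    (hV : V * Vᴴ = 1) (A : Matrix (Fin d) (Fin K) ℂ) :
    frobeniusNorm' (Vᴴ * A) = frobeniusNorm' A := by
  unfold frobeniusNorm'
  congr 2
  rw [Matrix.conjTranspose_mul, Matrix.conjTranspose_conjTranspose, Matrix.mul_assoc,
    ← Matrix.mul_assoc V, hV, Matrix.one_mul]

/-- The key Cauchy–Schwarz estimate: for a real diagonal contraction `diag s`,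
`|Tr(diag s · C D†)| ≤ ‖C‖₂ ‖D‖₂`. -/
lemma abs_trace_diagonal_mul_le {d K : ℕ} (s : Fin d → ℝ) (hs : ∀ j, |s j| ≤ 1)
    (C D : Matrix (Fin d) (Fin K) ℂ) :
    ‖Matrix.trace (Matrix.diagonal (fun j => (s j : ℂ)) * (C * Dᴴ))‖
      ≤ frobeniusNorm' C * frobeniusNorm' D := by
  have h1 : Matrix.trace (Matrix.diagonal (fun j => (s j : ℂ)) * (C * Dᴴ))
      = ∑ j, ∑ k, (s j : ℂ) * (C j k * star (D j k)) := by
    rw [Matrix.trace]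
    simp only [Matrix.diag_apply, Matrix.diagonal_mul]
    simp only [Matrix.mul_apply, Matrix.conjTranspose_apply, Finset.mul_sum]
  have hC : ∑ p : Fin d × Fin K, ‖C p.1 p.2‖ ^ 2
      = ∑ i, ∑ j, Complex.normSq (C i j) := by
    rw [Fintype.sum_prod_type]
    exact Finset.sum_congr rfl fun j _ => Finset.sum_congr rfl fun k _ => (Complex.sq_norm _)
  have hD : ∑ p : Fin d × Fin K, ‖D p.1 p.2‖ ^ 2
      = ∑ i, ∑ j, Complex.normSq (D i j) := by
    rw [Fintype.sum_prod_type]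
    exact Finset.sum_congr rfl fun j _ => Finset.sum_congr rfl fun k _ => (Complex.sq_norm _)
  rw [h1]
  calc ‖∑ j, ∑ k, (s j : ℂ) * (C j k * star (D j k))‖
      ≤ ∑ j, ∑ k, ‖(s j : ℂ) * (C j k * star (D j k))‖ := by
        refine (norm_sum_le _ _).trans ?_
        exact Finset.sum_le_sum fun j _ => norm_sum_le _ _
    _ = ∑ j, ∑ k, |s j| * (‖C j k‖ * ‖D j k‖) := by
        refine Finset.sum_congr rfl fun j _ => Finset.sum_congr rfl fun k _ => ?_
        rw [norm_mul, norm_mul, Complex.norm_real, Real.norm_eq_abs, Complex.star_def,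
          Complex.norm_conj]
    _ ≤ ∑ j, ∑ k, ‖C j k‖ * ‖D j k‖ := by
        refine Finset.sum_le_sum fun j _ => Finset.sum_le_sum fun k _ => ?_
        calc |s j| * (‖C j k‖ * ‖D j k‖)
            ≤ 1 * (‖C j k‖ * ‖D j k‖) := by
              apply mul_le_mul_of_nonneg_right (hs j); positivity
          _ = _ := one_mul _
    _ = ∑ p : Fin d × Fin K, ‖C p.1 p.2‖ * ‖D p.1 p.2‖ := by
        rw [Fintype.sum_prod_type]
    _ ≤ Real.sqrt (∑ p : Fin d × Fin K, ‖C p.1 p.2‖ ^ 2) *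
        Real.sqrt (∑ p : Fin d × Fin K, ‖D p.1 p.2‖ ^ 2) :=
        Real.sum_mul_le_sqrt_mul_sqrt _ _ _
    _ = frobeniusNorm' C * frobeniusNorm' D := by
        rw [hC, hD, frobeniusNorm'_eq, frobeniusNorm'_eq]

open scoped MatrixOrder in
lemma psdSqrt_aux {n : Type*} [Fintype n] [DecidableEq n] {A P : Matrix n n ℂ}
    (hA : A.PosSemidef) (hP : P.PosSemidef) (hPP : P * P = A) :
    hA.1.eigenvectorUnitary.1 * Matrix.diagonal ((↑) ∘ (√·) ∘ hA.1.eigenvalues) *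
      (star hA.1.eigenvectorUnitary : Matrix n n ℂ) = P := by
  have hQ : hA.1.eigenvectorUnitary.1 * Matrix.diagonal ((↑) ∘ (√·) ∘ hA.1.eigenvalues) *
      (star hA.1.eigenvectorUnitary : Matrix n n ℂ) = cfc Real.sqrt A := by
    rw [Matrix.IsHermitian.cfc_eq hA.1]; rfl
  rw [hQ]
  have hA0 : (0 : Matrix n n ℂ) ≤ A := hA.nonneg
  have hQ0 : (0 : Matrix n n ℂ) ≤ cfc Real.sqrt A :=
    cfc_nonneg fun x _ => Real.sqrt_nonneg x
  have hQQ : cfc Real.sqrt A * cfc Real.sqrt A = A := by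
    rw [← cfc_mul (a := A) Real.sqrt Real.sqrt]
    conv_rhs => rw [← cfc_id' ℝ A]
    refine cfc_congr fun x hx => ?_
    exact Real.mul_self_sqrt (spectrum_nonneg_of_nonneg hA0 hx)
  rw [← CFC.sqrt_unique hQQ hQ0, ← CFC.sqrt_unique hPP hP.nonneg]

end Aux

/-- **Trace-norm bound of Lemma 1.** If `X, Y` are `d × K` complex matrices such
that `ρ := XX†` and `σ := YY†` both have trace `1`, then
`‖ρ − σ‖₁ ≤ 2·‖X − Y‖₂`. -/
theorem traceNorm_diff_le_of_purifications {d K : ℕ}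
    (X Y : Matrix (Fin d) (Fin K) ℂ)
    (hX : Matrix.trace (X * Xᴴ) = 1) (hY : Matrix.trace (Y * Yᴴ) = 1) :
    traceNorm (X * Xᴴ - Y * Yᴴ) ≤ 2 * frobeniusNorm' (X - Y) := by
  classical
  set M : Matrix (Fin d) (Fin d) ℂ := X * Xᴴ - Y * Yᴴ with hMdef
  have hM : M.IsHermitian :=
    (Matrix.isHermitian_mul_conjTranspose_self X).sub
      (Matrix.isHermitian_mul_conjTranspose_self Y)
  set V : Matrix (Fin d) (Fin d) ℂ := (Matrix.IsHermitian.eigenvectorUnitary hM :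
      Matrix (Fin d) (Fin d) ℂ) with hVdef
  have hV1 : V * Vᴴ = 1 := by
    rw [← Matrix.star_eq_conjTranspose]
    exact Matrix.mem_unitaryGroup_iff.mp (Matrix.IsHermitian.eigenvectorUnitary hM).2
  have hV2 : Vᴴ * V = 1 := by
    rw [← Matrix.star_eq_conjTranspose]
    exact Matrix.mem_unitaryGroup_iff'.mp (Matrix.IsHermitian.eigenvectorUnitary hM).2
  set lam : Fin d → ℝ := hM.eigenvalues with hlam
  have hdiag : Vᴴ * M * V = Matrix.diagonal (fun j => (lam j : ℂ)) := by
    have h : M = V * Matrix.diagonal (fun j => (lam j : ℂ)) * Vᴴ := by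
      have h := hM.spectral_theorem
      rw [Unitary.conjStarAlgAut_apply, Matrix.star_eq_conjTranspose] at h
      exact h
    conv_lhs => rw [h]
    simp only [Matrix.mul_assoc]
    rw [← Matrix.mul_assoc Vᴴ V, hV2, Matrix.one_mul, Matrix.mul_one]
  have hMVD : M = V * Matrix.diagonal (fun j => (lam j : ℂ)) * Vᴴ := by
    have h := hM.spectral_theorem
    rw [Unitary.conjStarAlgAut_apply, Matrix.star_eq_conjTranspose] at h
    exact h
  have hconj : ∀ a b : Fin d → ℂ,
      (V * Matrix.diagonal a * Vᴴ) * (V * Matrix.diagonal b * Vᴴ)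
        = V * Matrix.diagonal (fun j => a j * b j) * Vᴴ := by
    intro a b
    simp only [Matrix.mul_assoc]
    rw [← Matrix.mul_assoc Vᴴ V, hV2, Matrix.one_mul,
      ← Matrix.mul_assoc (Matrix.diagonal a) (Matrix.diagonal b),
      Matrix.diagonal_mul_diagonal]
  -- Step 1 : traceNorm M = ∑ |lam j|
  have hMM : (Mᴴ * M).PosSemidef := Matrix.posSemidef_conjTranspose_mul_self M
  have hstep1 : traceNorm M = ∑ j, |lam j| := by
    set P : Matrix (Fin d) (Fin d) ℂ :=
      V * Matrix.diagonal (fun j => ((|lam j| : ℝ) : ℂ)) * Vᴴ with hPdef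
    have hP : P.PosSemidef := by
      refine Matrix.PosSemidef.mul_mul_conjTranspose_same ?_ V
      exact Matrix.posSemidef_diagonal_iff.mpr fun i => Complex.zero_le_real.mpr (abs_nonneg _)
    have hPsq : P ^ 2 = Mᴴ * M := by
      rw [show Mᴴ = M from hM]
      conv_rhs => rw [hMVD]
      have habs : (fun j => ((|lam j| : ℝ) : ℂ) * ((|lam j| : ℝ) : ℂ))
          = (fun j => ((lam j : ℝ) : ℂ) * ((lam j : ℝ) : ℂ)) := by
        funext j
        rw [← Complex.ofReal_mul, ← Complex.ofReal_mul, abs_mul_abs_self]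
      rw [pow_two, hPdef, hconj, hconj, habs]
    have hsqrt : psdSqrt (Mᴴ * M) = P := by
      rw [psdSqrt, dif_pos hMM]
      exact psdSqrt_aux hMM hP (by rw [← pow_two, hPsq])
    rw [traceNorm, hsqrt, hPdef, Matrix.trace_mul_comm, ← Matrix.mul_assoc, hV2,
      Matrix.one_mul, Matrix.trace_diagonal, Complex.re_sum]
    exact Finset.sum_congr rfl fun j _ => by simp
  -- the sign vector
  set s : Fin d → ℝ := fun j => if lam j < 0 then -1 else 1 with hs
  have hs1 : ∀ j, |s j| ≤ 1 := by
    intro j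
    rw [hs]
    dsimp only
    split <;> simp
  have hslam : ∀ j, s j * lam j = |lam j| := by
    intro j
    rw [hs]
    dsimp only
    split
    · next h => rw [abs_of_neg h]; ring
    · next h => rw [abs_of_nonneg (not_lt.mp h)]; ring
  -- Step 2 : ∑ |lam j| = re Tr(diag s * (Vᴴ M V))
  have hstep2 : (∑ j, |lam j|)
      = (Matrix.trace (Matrix.diagonal (fun j => (s j : ℂ)) * (Vᴴ * M * V))).re := by
    rw [hdiag, Matrix.diagonal_mul_diagonal, Matrix.trace_diagonal, Complex.re_sum]
    refine Finset.sum_congr rfl fun j _ => ?_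
    simp only [Pi.mul_apply, ← Complex.ofReal_mul, Complex.ofReal_re, hslam j]
  -- decomposition M = X (X-Y)ᴴ + (X-Y) Yᴴ
  have hdecomp : M = X * (X - Y)ᴴ + (X - Y) * Yᴴ := by
    rw [hMdef, Matrix.conjTranspose_sub, Matrix.mul_sub, Matrix.sub_mul]
    abel
  have hAB : ∀ (A B : Matrix (Fin d) (Fin K) ℂ),
      Vᴴ * (A * Bᴴ) * V = (Vᴴ * A) * (Vᴴ * B)ᴴ := by
    intro A B
    rw [Matrix.conjTranspose_mul, Matrix.conjTranspose_conjTranspose]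
    simp [Matrix.mul_assoc]
  have hsplit : Vᴴ * M * V
      = (Vᴴ * X) * (Vᴴ * (X - Y))ᴴ + (Vᴴ * (X - Y)) * (Vᴴ * Y)ᴴ := by
    conv_lhs => rw [hdecomp]
    rw [Matrix.mul_add, Matrix.add_mul, hAB, hAB]
  have hfrobX : frobeniusNorm' X = 1 := by
    rw [frobeniusNorm', Matrix.trace_mul_comm, hX]
    simp
  have hfrobY : frobeniusNorm' Y = 1 := by
    rw [frobeniusNorm', Matrix.trace_mul_comm, hY]
    simp
  set D : Matrix (Fin d) (Fin d) ℂ := Matrix.diagonal (fun j => (s j : ℂ)) with hD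
  have key : traceNorm M
      = (Matrix.trace (D * ((Vᴴ * X) * (Vᴴ * (X - Y))ᴴ))).re
        + (Matrix.trace (D * ((Vᴴ * (X - Y)) * (Vᴴ * Y)ᴴ))).re := by
    rw [hstep1, hstep2, hsplit, Matrix.mul_add, Matrix.trace_add, Complex.add_re]
  rw [key]
  have b1 := abs_trace_diagonal_mul_le s hs1 (Vᴴ * X) (Vᴴ * (X - Y))
  have b2 := abs_trace_diagonal_mul_le s hs1 (Vᴴ * (X - Y)) (Vᴴ * Y)
  rw [frobeniusNorm'_conjTranspose_unitary_mul V hV1,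
    frobeniusNorm'_conjTranspose_unitary_mul V hV1] at b1 b2
  calc (Matrix.trace (D * ((Vᴴ * X) * (Vᴴ * (X - Y))ᴴ))).re
        + (Matrix.trace (D * ((Vᴴ * (X - Y)) * (Vᴴ * Y)ᴴ))).re
      ≤ ‖Matrix.trace (D * ((Vᴴ * X) * (Vᴴ * (X - Y))ᴴ))‖
        + ‖Matrix.trace (D * ((Vᴴ * (X - Y)) * (Vᴴ * Y)ᴴ))‖ :=
        add_le_add (Complex.re_le_norm _) (Complex.re_le_norm _)
    _ ≤ frobeniusNorm' X * frobeniusNorm' (X - Y)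
        + frobeniusNorm' (X - Y) * frobeniusNorm' Y := add_le_add b1 b2
    _ = 2 * frobeniusNorm' (X - Y) := by rw [hfrobX, hfrobY]; ring
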